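/- arXiv:1602.06751 — 2 statements merged into one kernel-verified Lean document; each statement's English description precedes it below -/
import Mathlib

section
/- Suppose there exist simple 5-(18,6,5), 5-(18,7,6), 5-(18,8,60), 5-(18,9,210) and 5-(18,10,990) designs. Then there exists a simple 5-(36, 10, 34146) design (note 34146 = 542 × 63). -/
open Finset


lemma count_subsets (X S : Finset ℕ) (n : ℕ) (hS : S ⊆ X) (hn : S.card ≤ n) :
    ((X.powersetCard n).filter (fun T => S ⊆ T)).card
      = Nat.choose (X.card - S.card) (n - S.card) := by
  have h1 : ((X \ S).powersetCard (n - S.card)).card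
      = Nat.choose (X.card - S.card) (n - S.card) := by
    rw [Finset.card_powersetCard, Finset.card_sdiff_of_subset hS]
  rw [← h1]
  apply Finset.card_bij' (fun T _ => T \ S) (fun U _ => U ∪ S)
  · intro T hT
    simp only [mem_filter, Finset.mem_powersetCard] at hT
    rw [Finset.mem_powersetCard]
    exact ⟨Finset.sdiff_subset_sdiff hT.1.1 le_rfl,
      by rw [Finset.card_sdiff_of_subset hT.2, hT.1.2]⟩
  · intro U hU
    rw [Finset.mem_powersetCard] at hU
    simp only [mem_filter, Finset.mem_powersetCard]
    have hdisj : Disjoint U S := Finset.disjoint_of_subset_left hU.1 Finset.sdiff_disjoint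
    refine ⟨⟨Finset.union_subset (hU.1.trans (Finset.sdiff_subset)) hS, ?_⟩,
      Finset.subset_union_right⟩
    rw [Finset.card_union_of_disjoint hdisj, hU.2]
    omega
  · intro T hT
    simp only [mem_filter] at hT
    exact Finset.sdiff_union_of_subset hT.2
  · intro U hU
    rw [Finset.mem_powersetCard] at hU
    exact Finset.union_sdiff_cancel_right
      (Finset.disjoint_of_subset_left hU.1 Finset.sdiff_disjoint)

lemma complete_count_lt (X S : Finset ℕ) (n : ℕ) (h : n < S.card) :
    ((X.powersetCard n).filter (fun T => S ⊆ T)).card = 0 := by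
  rw [Finset.card_eq_zero, Finset.filter_eq_empty_iff]
  intro T hT hST
  rw [Finset.mem_powersetCard] at hT
  have := Finset.card_le_card hST
  omega

lemma design_count (X : Finset ℕ) (B : Finset (Finset ℕ)) (v k lam : ℕ)
    (hX : X.card = v)
    (hB : ∀ b ∈ B, b ⊆ X ∧ b.card = k)
    (hl : ∀ T ⊆ X, T.card = 5 → (B.filter (fun b => T ⊆ b)).card = lam)
    (S : Finset ℕ) (hS : S ⊆ X) (hj : S.card ≤ 5) :
    (B.filter (fun b => S ⊆ b)).card * Nat.choose (k - S.card) (5 - S.card)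
      = lam * Nat.choose (v - S.card) (5 - S.card) := by
  set P := (X.powersetCard 5).filter (fun T => S ⊆ T) with hP
  have key : ∑ T ∈ P, (B.filter (fun b => T ⊆ b)).card
      = lam * Nat.choose (v - S.card) (5 - S.card) := by
    have h2 : ∀ T ∈ P, (B.filter (fun b => T ⊆ b)).card = lam := by
      intro T hT
      simp only [hP, mem_filter, Finset.mem_powersetCard] at hT
      exact hl T hT.1.1 hT.1.2
    rw [Finset.sum_congr rfl h2, Finset.sum_const, smul_eq_mul, hP,
      count_subsets X S 5 hS hj, hX, mul_comm]
  have swap : ∑ T ∈ P, (B.filter (fun b => T ⊆ b)).card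
      = ∑ b ∈ B, (P.filter (fun T => T ⊆ b)).card := by
    simp_rw [Finset.card_filter]
    rw [Finset.sum_comm]
  have perb : ∀ b ∈ B, (P.filter (fun T => T ⊆ b)).card
      = if S ⊆ b then Nat.choose (k - S.card) (5 - S.card) else 0 := by
    intro b hb
    by_cases hSb : S ⊆ b
    · rw [if_pos hSb]
      have he : P.filter (fun T => T ⊆ b)
          = (b.powersetCard 5).filter (fun T => S ⊆ T) := by
        ext T
        simp only [hP, mem_filter, Finset.mem_powersetCard]
        constructor
        · rintro ⟨⟨⟨_, hT5⟩, hST⟩, hTb⟩; exact ⟨⟨hTb, hT5⟩, hST⟩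
        · rintro ⟨⟨hTb, hT5⟩, hST⟩
          exact ⟨⟨⟨hTb.trans (hB b hb).1, hT5⟩, hST⟩, hTb⟩
      rw [he, count_subsets b S 5 hSb hj, (hB b hb).2]
    · rw [if_neg hSb, Finset.card_eq_zero, Finset.filter_eq_empty_iff]
      intro T hT
      simp only [hP, mem_filter] at hT
      exact fun hTb => hSb (hT.2.trans hTb)
  rw [swap, Finset.sum_congr rfl perb, Finset.sum_ite, Finset.sum_const,
    Finset.sum_const, smul_eq_mul, smul_eq_mul, mul_zero, add_zero] at key
  exact key


lemma disj_of_inter_card {A B : Finset (Finset ℕ)} {X₁ : Finset ℕ} {a a' : ℕ} (h : a ≠ a')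
    (hA : ∀ b ∈ A, (b ∩ X₁).card = a) (hB : ∀ b ∈ B, (b ∩ X₁).card = a') :
    Disjoint A B := by
  rw [Finset.disjoint_left]
  intro b hb hb'
  exact absurd ((hA b hb).symm.trans (hB b hb')) h

lemma card_union10 (X₁ : Finset ℕ) (C0 C1 C2 C3 C4 C6 C7 C8 C9 C10 : Finset (Finset ℕ))
    (h0 : ∀ b ∈ C0, (b ∩ X₁).card = 0)
    (h1 : ∀ b ∈ C1, (b ∩ X₁).card = 1)
    (h2 : ∀ b ∈ C2, (b ∩ X₁).card = 2)
    (h3 : ∀ b ∈ C3, (b ∩ X₁).card = 3)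
    (h4 : ∀ b ∈ C4, (b ∩ X₁).card = 4)
    (h6 : ∀ b ∈ C6, (b ∩ X₁).card = 6)
    (h7 : ∀ b ∈ C7, (b ∩ X₁).card = 7)
    (h8 : ∀ b ∈ C8, (b ∩ X₁).card = 8)
    (h9 : ∀ b ∈ C9, (b ∩ X₁).card = 9)
    (h10 : ∀ b ∈ C10, (b ∩ X₁).card = 10)
    : (C0 ∪ C1 ∪ C2 ∪ C3 ∪ C4 ∪ C6 ∪ C7 ∪ C8 ∪ C9 ∪ C10).card
      = C0.card + C1.card + C2.card + C3.card + C4.card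
        + C6.card + C7.card + C8.card + C9.card + C10.card := by
  have d0_1 : Disjoint C0 C1 := disj_of_inter_card (by norm_num) h0 h1
  have d0_2 : Disjoint C0 C2 := disj_of_inter_card (by norm_num) h0 h2
  have d0_3 : Disjoint C0 C3 := disj_of_inter_card (by norm_num) h0 h3
  have d0_4 : Disjoint C0 C4 := disj_of_inter_card (by norm_num) h0 h4
  have d0_6 : Disjoint C0 C6 := disj_of_inter_card (by norm_num) h0 h6
  have d0_7 : Disjoint C0 C7 := disj_of_inter_card (by norm_num) h0 h7
  have d0_8 : Disjoint C0 C8 := disj_of_inter_card (by norm_num) h0 h8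
  have d0_9 : Disjoint C0 C9 := disj_of_inter_card (by norm_num) h0 h9
  have d0_10 : Disjoint C0 C10 := disj_of_inter_card (by norm_num) h0 h10
  have d1_2 : Disjoint C1 C2 := disj_of_inter_card (by norm_num) h1 h2
  have d1_3 : Disjoint C1 C3 := disj_of_inter_card (by norm_num) h1 h3
  have d1_4 : Disjoint C1 C4 := disj_of_inter_card (by norm_num) h1 h4
  have d1_6 : Disjoint C1 C6 := disj_of_inter_card (by norm_num) h1 h6
  have d1_7 : Disjoint C1 C7 := disj_of_inter_card (by norm_num) h1 h7
  have d1_8 : Disjoint C1 C8 := disj_of_inter_card (by norm_num) h1 h8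
  have d1_9 : Disjoint C1 C9 := disj_of_inter_card (by norm_num) h1 h9
  have d1_10 : Disjoint C1 C10 := disj_of_inter_card (by norm_num) h1 h10
  have d2_3 : Disjoint C2 C3 := disj_of_inter_card (by norm_num) h2 h3
  have d2_4 : Disjoint C2 C4 := disj_of_inter_card (by norm_num) h2 h4
  have d2_6 : Disjoint C2 C6 := disj_of_inter_card (by norm_num) h2 h6
  have d2_7 : Disjoint C2 C7 := disj_of_inter_card (by norm_num) h2 h7
  have d2_8 : Disjoint C2 C8 := disj_of_inter_card (by norm_num) h2 h8
  have d2_9 : Disjoint C2 C9 := disj_of_inter_card (by norm_num) h2 h9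
  have d2_10 : Disjoint C2 C10 := disj_of_inter_card (by norm_num) h2 h10
  have d3_4 : Disjoint C3 C4 := disj_of_inter_card (by norm_num) h3 h4
  have d3_6 : Disjoint C3 C6 := disj_of_inter_card (by norm_num) h3 h6
  have d3_7 : Disjoint C3 C7 := disj_of_inter_card (by norm_num) h3 h7
  have d3_8 : Disjoint C3 C8 := disj_of_inter_card (by norm_num) h3 h8
  have d3_9 : Disjoint C3 C9 := disj_of_inter_card (by norm_num) h3 h9
  have d3_10 : Disjoint C3 C10 := disj_of_inter_card (by norm_num) h3 h10
  have d4_6 : Disjoint C4 C6 := disj_of_inter_card (by norm_num) h4 h6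
  have d4_7 : Disjoint C4 C7 := disj_of_inter_card (by norm_num) h4 h7
  have d4_8 : Disjoint C4 C8 := disj_of_inter_card (by norm_num) h4 h8
  have d4_9 : Disjoint C4 C9 := disj_of_inter_card (by norm_num) h4 h9
  have d4_10 : Disjoint C4 C10 := disj_of_inter_card (by norm_num) h4 h10
  have d6_7 : Disjoint C6 C7 := disj_of_inter_card (by norm_num) h6 h7
  have d6_8 : Disjoint C6 C8 := disj_of_inter_card (by norm_num) h6 h8
  have d6_9 : Disjoint C6 C9 := disj_of_inter_card (by norm_num) h6 h9
  have d6_10 : Disjoint C6 C10 := disj_of_inter_card (by norm_num) h6 h10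
  have d7_8 : Disjoint C7 C8 := disj_of_inter_card (by norm_num) h7 h8
  have d7_9 : Disjoint C7 C9 := disj_of_inter_card (by norm_num) h7 h9
  have d7_10 : Disjoint C7 C10 := disj_of_inter_card (by norm_num) h7 h10
  have d8_9 : Disjoint C8 C9 := disj_of_inter_card (by norm_num) h8 h9
  have d8_10 : Disjoint C8 C10 := disj_of_inter_card (by norm_num) h8 h10
  have d9_10 : Disjoint C9 C10 := disj_of_inter_card (by norm_num) h9 h10
  rw [Finset.card_union_of_disjoint (by simp only [Finset.disjoint_union_left]; exact ⟨⟨⟨⟨⟨⟨⟨⟨d0_10, d1_10⟩, d2_10⟩, d3_10⟩, d4_10⟩, d6_10⟩, d7_10⟩, d8_10⟩, d9_10⟩), Finset.card_union_of_disjoint (by simp only [Finset.disjoint_union_left]; exact ⟨⟨⟨⟨⟨⟨⟨d0_9, d1_9⟩, d2_9⟩, d3_9⟩, d4_9⟩, d6_9⟩, d7_9⟩, d8_9⟩), Finset.card_union_of_disjoint (by simp only [Finset.disjoint_union_left]; exact ⟨⟨⟨⟨⟨⟨d0_8, d1_8⟩, d2_8⟩, d3_8⟩, d4_8⟩, d6_8⟩,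 d7_8⟩), Finset.card_union_of_disjoint (by simp only [Finset.disjoint_union_left]; exact ⟨⟨⟨⟨⟨d0_7, d1_7⟩, d2_7⟩, d3_7⟩, d4_7⟩, d6_7⟩), Finset.card_union_of_disjoint (by simp only [Finset.disjoint_union_left]; exact ⟨⟨⟨⟨d0_6, d1_6⟩, d2_6⟩, d3_6⟩, d4_6⟩), Finset.card_union_of_disjoint (by simp only [Finset.disjoint_union_left]; exact ⟨⟨⟨d0_4, d1_4⟩, d2_4⟩, d3_4⟩), Finset.card_union_of_disjoint (by simp only [Finset.disjoint_union_left]; exact ⟨⟨d0_3, d1_3⟩, d2_3⟩), Finset.card_union_of_disjoint (by simp only [Finset.disjoint_union_left]; exact ⟨d0_2, d1_2⟩), Finset.card_union_of_disjoint d0_1]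

lemma main_arith (j : ℕ) (hj : j ≤ 5)
    (L0 L1 L2 L3 L4 R0 R1 R2 R3 R4 c6 c7 c8 c9 c10 e6 e7 e8 e9 e10 : ℕ)
    (hL0p : j ≤ 0 → L0 = Nat.choose (18 - j) (0 - j)) (hL0n : 0 < j → L0 = 0)
    (hL1p : j ≤ 1 → L1 = Nat.choose (18 - j) (1 - j)) (hL1n : 1 < j → L1 = 0)
    (hL2p : j ≤ 2 → L2 = Nat.choose (18 - j) (2 - j)) (hL2n : 2 < j → L2 = 0)
    (hL3p : j ≤ 3 → L3 = Nat.choose (18 - j) (3 - j)) (hL3n : 3 < j → L3 = 0)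
    (hL4p : j ≤ 4 → L4 = Nat.choose (18 - j) (4 - j)) (hL4n : 4 < j → L4 = 0)
    (hR0p : 5 - j ≤ 0 → R0 = Nat.choose (18 - (5 - j)) (0 - (5 - j))) (hR0n : 0 < 5 - j → R0 = 0)
    (hR1p : 5 - j ≤ 1 → R1 = Nat.choose (18 - (5 - j)) (1 - (5 - j))) (hR1n : 1 < 5 - j → R1 = 0)
    (hR2p : 5 - j ≤ 2 → R2 = Nat.choose (18 - (5 - j)) (2 - (5 - j))) (hR2n : 2 < 5 - j → R2 = 0)
    (hR3p : 5 - j ≤ 3 → R3 = Nat.choose (18 - (5 - j)) (3 - (5 - j))) (hR3n : 3 < 5 - j → R3 = 0)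
    (hR4p : 5 - j ≤ 4 → R4 = Nat.choose (18 - (5 - j)) (4 - (5 - j))) (hR4n : 4 < 5 - j → R4 = 0)
    (hc6 : c6 * Nat.choose (6 - j) (5 - j) = 5 * Nat.choose (18 - j) (5 - j))
    (hc7 : c7 * Nat.choose (7 - j) (5 - j) = 6 * Nat.choose (18 - j) (5 - j))
    (hc8 : c8 * Nat.choose (8 - j) (5 - j) = 60 * Nat.choose (18 - j) (5 - j))
    (hc9 : c9 * Nat.choose (9 - j) (5 - j) = 210 * Nat.choose (18 - j) (5 - j))
    (hc10 : c10 * Nat.choose (10 - j) (5 - j) = 990 * Nat.choose (18 - j) (5 - j))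
    (he6 : e6 * Nat.choose (6 - (5 - j)) (5 - (5 - j)) = 5 * Nat.choose (18 - (5 - j)) (5 - (5 - j))) 
    (he7 : e7 * Nat.choose (7 - (5 - j)) (5 - (5 - j)) = 6 * Nat.choose (18 - (5 - j)) (5 - (5 - j))) 
    (he8 : e8 * Nat.choose (8 - (5 - j)) (5 - (5 - j)) = 60 * Nat.choose (18 - (5 - j)) (5 - (5 - j))) 
    (he9 : e9 * Nat.choose (9 - (5 - j)) (5 - (5 - j)) = 210 * Nat.choose (18 - (5 - j)) (5 - (5 - j))) 
    (he10 : e10 * Nat.choose (10 - (5 - j)) (5 - (5 - j)) = 990 * Nat.choose (18 - (5 - j)) (5 - (5 - j))) 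
    : L0 * e10 + L1 * e9 + L2 * e8 + L3 * e7 + L4 * e6
      + c6 * R4 + c7 * R3 + c8 * R2 + c9 * R1 + c10 * R0 = 34146 := by
  interval_cases j
  · norm_num [Nat.choose] at hL0p hR0n hL1p hR1n hL2p hR2n hL3p hR3n hL4p hR4n hc6 he6 hc7 he7 hc8 he8 hc9 he9 hc10 he10
    have hvL0 : L0 = 1 := by omega
    subst hvL0
    have hvR0 : R0 = 0 := by omega
    subst hvR0
    have hvL1 : L1 = 18 := by omega
    subst hvL1
    have hvR1 : R1 = 0 := by omega
    subst hvR1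
    have hvL2 : L2 = 153 := by omega
    subst hvL2
    have hvR2 : R2 = 0 := by omega
    subst hvR2
    have hvL3 : L3 = 816 := by omega
    subst hvL3
    have hvR3 : R3 = 0 := by omega
    subst hvR3
    have hvL4 : L4 = 3060 := by omega
    subst hvL4
    have hvR4 : R4 = 0 := by omega
    subst hvR4
    have hvc6 : c6 = 7140 := by omega
    subst hvc6
    have hve6 : e6 = 5 := by omega
    subst hve6
    have hvc7 : c7 = 2448 := by omega
    subst hvc7
    have hve7 : e7 = 6 := by omega
    subst hve7
    have hvc8 : c8 = 9180 := by omega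
    subst hvc8
    have hve8 : e8 = 60 := by omega
    subst hve8
    have hvc9 : c9 = 14280 := by omega
    subst hvc9
    have hve9 : e9 = 210 := by omega
    subst hve9
    have hvc10 : c10 = 33660 := by omega
    subst hvc10
    have hve10 : e10 = 990 := by omega
    subst hve10
    norm_num
  · norm_num [Nat.choose] at hL0n hR0n hL1p hR1n hL2p hR2n hL3p hR3n hL4p hR4p hc6 he6 hc7 he7 hc8 he8 hc9 he9 hc10 he10
    have hvL0 : L0 = 0 := by omega
    subst hvL0
    have hvR0 : R0 = 0 := by omega
    subst hvR0
    have hvL1 : L1 = 1 := by omega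
    subst hvL1
    have hvR1 : R1 = 0 := by omega
    subst hvR1
    have hvL2 : L2 = 17 := by omega
    subst hvL2
    have hvR2 : R2 = 0 := by omega
    subst hvR2
    have hvL3 : L3 = 136 := by omega
    subst hvL3
    have hvR3 : R3 = 0 := by omega
    subst hvR3
    have hvL4 : L4 = 680 := by omega
    subst hvL4
    have hvR4 : R4 = 1 := by omega
    subst hvR4
    have hvc6 : c6 = 2380 := by omega
    subst hvc6
    have hve6 : e6 = 35 := by omega
    subst hve6
    have hvc7 : c7 = 952 := by omega
    subst hvc7
    have hve7 : e7 = 28 := by omega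
    subst hve7
    have hvc8 : c8 = 4080 := by omega
    subst hvc8
    have hve8 : e8 = 210 := by omega
    subst hve8
    have hvc9 : c9 = 7140 := by omega
    subst hvc9
    have hve9 : e9 = 588 := by omega
    subst hve9
    have hvc10 : c10 = 18700 := by omega
    subst hvc10
    have hve10 : e10 = 2310 := by omega
    subst hve10
    norm_num
  · norm_num [Nat.choose] at hL0n hR0n hL1n hR1n hL2p hR2n hL3p hR3p hL4p hR4p hc6 he6 hc7 he7 hc8 he8 hc9 he9 hc10 he10
    have hvL0 : L0 = 0 := by omega
    subst hvL0
    have hvR0 : R0 = 0 := by omega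
    subst hvR0
    have hvL1 : L1 = 0 := by omega
    subst hvL1
    have hvR1 : R1 = 0 := by omega
    subst hvR1
    have hvL2 : L2 = 1 := by omega
    subst hvL2
    have hvR2 : R2 = 0 := by omega
    subst hvR2
    have hvL3 : L3 = 16 := by omega
    subst hvL3
    have hvR3 : R3 = 1 := by omega
    subst hvR3
    have hvL4 : L4 = 120 := by omega
    subst hvL4
    have hvR4 : R4 = 15 := by omega
    subst hvR4
    have hvc6 : c6 = 700 := by omega
    subst hvc6
    have hve6 : e6 = 175 := by omega
    subst hve6
    have hvc7 : c7 = 336 := by omega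
    subst hvc7
    have hve7 : e7 = 105 := by omega
    subst hve7
    have hvc8 : c8 = 1680 := by omega
    subst hvc8
    have hve8 : e8 = 630 := by omega
    subst hve8
    have hvc9 : c9 = 3360 := by omega
    subst hvc9
    have hve9 : e9 = 1470 := by omega
    subst hve9
    have hvc10 : c10 = 9900 := by omega
    subst hvc10
    have hve10 : e10 = 4950 := by omega
    subst hve10
    norm_num
  · norm_num [Nat.choose] at hL0n hR0n hL1n hR1n hL2n hR2p hL3p hR3p hL4p hR4p hc6 he6 hc7 he7 hc8 he8 hc9 he9 hc10 he10
    have hvL0 : L0 = 0 := by omega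
    subst hvL0
    have hvR0 : R0 = 0 := by omega
    subst hvR0
    have hvL1 : L1 = 0 := by omega
    subst hvL1
    have hvR1 : R1 = 0 := by omega
    subst hvR1
    have hvL2 : L2 = 0 := by omega
    subst hvL2
    have hvR2 : R2 = 1 := by omega
    subst hvR2
    have hvL3 : L3 = 1 := by omega
    subst hvL3
    have hvR3 : R3 = 16 := by omega
    subst hvR3
    have hvL4 : L4 = 15 := by omega
    subst hvL4
    have hvR4 : R4 = 120 := by omega
    subst hvR4
    have hvc6 : c6 = 175 := by omega
    subst hvc6
    have hve6 : e6 = 700 := by omega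
    subst hve6
    have hvc7 : c7 = 105 := by omega
    subst hvc7
    have hve7 : e7 = 336 := by omega
    subst hve7
    have hvc8 : c8 = 630 := by omega
    subst hvc8
    have hve8 : e8 = 1680 := by omega
    subst hve8
    have hvc9 : c9 = 1470 := by omega
    subst hvc9
    have hve9 : e9 = 3360 := by omega
    subst hve9
    have hvc10 : c10 = 4950 := by omega
    subst hvc10
    have hve10 : e10 = 9900 := by omega
    subst hve10
    norm_num
  · norm_num [Nat.choose] at hL0n hR0n hL1n hR1p hL2n hR2p hL3n hR3p hL4p hR4p hc6 he6 hc7 he7 hc8 he8 hc9 he9 hc10 he10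
    have hvL0 : L0 = 0 := by omega
    subst hvL0
    have hvR0 : R0 = 0 := by omega
    subst hvR0
    have hvL1 : L1 = 0 := by omega
    subst hvL1
    have hvR1 : R1 = 1 := by omega
    subst hvR1
    have hvL2 : L2 = 0 := by omega
    subst hvL2
    have hvR2 : R2 = 17 := by omega
    subst hvR2
    have hvL3 : L3 = 0 := by omega
    subst hvL3
    have hvR3 : R3 = 136 := by omega
    subst hvR3
    have hvL4 : L4 = 1 := by omega
    subst hvL4
    have hvR4 : R4 = 680 := by omega
    subst hvR4
    have hvc6 : c6 = 35 := by omega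
    subst hvc6
    have hve6 : e6 = 2380 := by omega
    subst hve6
    have hvc7 : c7 = 28 := by omega
    subst hvc7
    have hve7 : e7 = 952 := by omega
    subst hve7
    have hvc8 : c8 = 210 := by omega
    subst hvc8
    have hve8 : e8 = 4080 := by omega
    subst hve8
    have hvc9 : c9 = 588 := by omega
    subst hvc9
    have hve9 : e9 = 7140 := by omega
    subst hve9
    have hvc10 : c10 = 2310 := by omega
    subst hvc10
    have hve10 : e10 = 18700 := by omega
    subst hve10
    norm_num
  · norm_num [Nat.choose] at hL0n hR0p hL1n hR1p hL2n hR2p hL3n hR3p hL4n hR4p hc6 he6 hc7 he7 hc8 he8 hc9 he9 hc10 he10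
    have hvL0 : L0 = 0 := by omega
    subst hvL0
    have hvR0 : R0 = 1 := by omega
    subst hvR0
    have hvL1 : L1 = 0 := by omega
    subst hvL1
    have hvR1 : R1 = 18 := by omega
    subst hvR1
    have hvL2 : L2 = 0 := by omega
    subst hvL2
    have hvR2 : R2 = 153 := by omega
    subst hvR2
    have hvL3 : L3 = 0 := by omega
    subst hvL3
    have hvR3 : R3 = 816 := by omega
    subst hvR3
    have hvL4 : L4 = 0 := by omega
    subst hvL4
    have hvR4 : R4 = 3060 := by omega
    subst hvR4
    have hvc6 : c6 = 5 := by omega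
    subst hvc6
    have hve6 : e6 = 7140 := by omega
    subst hve6
    have hvc7 : c7 = 6 := by omega
    subst hvc7
    have hve7 : e7 = 2448 := by omega
    subst hve7
    have hvc8 : c8 = 60 := by omega
    subst hvc8
    have hve8 : e8 = 9180 := by omega
    subst hve8
    have hvc9 : c9 = 210 := by omega
    subst hvc9
    have hve9 : e9 = 14280 := by omega
    subst hve9
    have hvc10 : c10 = 990 := by omega
    subst hvc10
    have hve10 : e10 = 33660 := by omega
    subst hve10
    norm_num


lemma piece_count (X₁ X₂ : Finset ℕ) (hd : Disjoint X₁ X₂)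
    (F G : Finset (Finset ℕ))
    (hF : ∀ A ∈ F, A ⊆ X₁) (hG : ∀ C ∈ G, C ⊆ X₂)
    (T : Finset ℕ) (hT : T ⊆ X₁ ∪ X₂) :
    ((((F ×ˢ G).image fun p => p.1 ∪ p.2)).filter (fun b => T ⊆ b)).card
      = (F.filter (fun A => T ∩ X₁ ⊆ A)).card
        * (G.filter (fun C => T ∩ X₂ ⊆ C)).card := by
  rw [Finset.filter_image]
  have hcond : ((F ×ˢ G).filter (fun p => T ⊆ p.1 ∪ p.2))
      = (F ×ˢ G).filter (fun p => (T ∩ X₁ ⊆ p.1) ∧ (T ∩ X₂ ⊆ p.2)) := by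
    apply Finset.filter_congr
    intro p hp
    rw [Finset.mem_product] at hp
    have hA := hF p.1 hp.1
    have hC := hG p.2 hp.2
    constructor
    · intro h
      constructor
      · intro x hx
        rw [Finset.mem_inter] at hx
        rcases Finset.mem_union.mp (h hx.1) with h1 | h2
        · exact h1
        · exact absurd (hC h2) (Finset.disjoint_left.mp hd hx.2)
      · intro x hx
        rw [Finset.mem_inter] at hx
        rcases Finset.mem_union.mp (h hx.1) with h1 | h2
        · exact absurd hx.2 (Finset.disjoint_left.mp hd (hA h1))
        · exact h2
    · rintro ⟨h1, h2⟩ x hx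
      rcases Finset.mem_union.mp (hT hx) with hx1 | hx2
      · exact Finset.mem_union_left _ (h1 (Finset.mem_inter.mpr ⟨hx, hx1⟩))
      · exact Finset.mem_union_right _ (h2 (Finset.mem_inter.mpr ⟨hx, hx2⟩))
  rw [hcond, Finset.filter_product, Finset.card_image_of_injOn, Finset.card_product]
  intro p hp q hq heq
  simp only [Finset.mem_coe, Finset.mem_filter, Finset.mem_product] at hp hq
  have recov : ∀ r : Finset ℕ × Finset ℕ, r.1 ∈ F → r.2 ∈ G →
      (r.1 ∪ r.2) ∩ X₁ = r.1 ∧ (r.1 ∪ r.2) ∩ X₂ = r.2 := by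
    intro r h1 h2
    have hA := hF r.1 h1
    have hC := hG r.2 h2
    constructor
    · rw [Finset.union_inter_distrib_right, Finset.inter_eq_left.mpr hA,
        Finset.disjoint_iff_inter_eq_empty.mp
          (Finset.disjoint_of_subset_left hC hd.symm), Finset.union_empty]
    · rw [Finset.union_inter_distrib_right, Finset.inter_eq_left.mpr hC,
        Finset.disjoint_iff_inter_eq_empty.mp
          (Finset.disjoint_of_subset_left hA hd), Finset.empty_union]
  obtain ⟨hp1, hp2⟩ := recov p hp.1.1 hp.2.1
  obtain ⟨hq1, hq2⟩ := recov q hq.1.1 hq.2.1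
  have heq' : p.1 ∪ p.2 = q.1 ∪ q.2 := heq
  have : p.1 = q.1 := by rw [← hp1, ← hq1, heq']
  have h2 : p.2 = q.2 := by rw [← hp2, ← hq2, heq']
  exact Prod.ext this h2



/-- `SimpleDesignExists t v k lam` asserts the existence of a simple
`t-(v, k, lam)` design: a `v`-set `X` together with a set `B` of distinct
`k`-element subsets of `X` (blocks) such that every `t`-element subset of `X`
is contained in exactly `lam` blocks. -/
def SimpleDesignExists (t v k lam : ℕ) : Prop :=
  ∃ (X : Finset ℕ) (B : Finset (Finset ℕ)),
    X.card = v ∧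
    (∀ b ∈ B, b ⊆ X ∧ b.card = k) ∧
    (∀ T ⊆ X, T.card = t → (B.filter (fun b => T ⊆ b)).card = lam)


lemma transport {t v k lam : ℕ} (h : SimpleDesignExists t v k lam)
    (X : Finset ℕ) (hX : X.card = v) :
    ∃ B : Finset (Finset ℕ), (∀ b ∈ B, b ⊆ X ∧ b.card = k) ∧
      ∀ T ⊆ X, T.card = t → (B.filter (fun b => T ⊆ b)).card = lam := by
  obtain ⟨X₀, B₀, hX₀, hB₀, hl₀⟩ := h
  have hcard : Fintype.card {x // x ∈ X₀} = Fintype.card {x // x ∈ X} := by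
    simp [Fintype.card_coe, hX₀, hX]
  let e := Fintype.equivOfCardEq hcard
  let f : ℕ → ℕ := fun x => if h : x ∈ X₀ then (e ⟨x, h⟩ : ℕ) else 0
  have hfmem : ∀ x ∈ X₀, f x ∈ X := by
    intro x hx
    simp only [f, dif_pos hx]
    exact (e ⟨x, hx⟩).2
  have hinj : ∀ x ∈ X₀, ∀ y ∈ X₀, f x = f y → x = y := by
    intro x hx y hy hxy
    simp only [f, dif_pos hx, dif_pos hy] at hxy
    have h2 : e ⟨x, hx⟩ = e ⟨y, hy⟩ := Subtype.ext hxy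
    exact congrArg Subtype.val (e.injective h2)
  have hsurj : ∀ y ∈ X, ∃ x ∈ X₀, f x = y := by
    intro y hy
    refine ⟨(e.symm ⟨y, hy⟩ : ℕ), (e.symm ⟨y, hy⟩).2, ?_⟩
    simp only [f, dif_pos (e.symm ⟨y, hy⟩).2]
    have : (⟨(e.symm ⟨y, hy⟩ : ℕ), (e.symm ⟨y, hy⟩).2⟩ : {x // x ∈ X₀})
        = e.symm ⟨y, hy⟩ := rfl
    rw [this, Equiv.apply_symm_apply]
  -- image subset iff
  have himgss : ∀ S ⊆ X₀, ∀ b ⊆ X₀, (S.image f ⊆ b.image f ↔ S ⊆ b) := by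
    intro S hS b hb
    constructor
    · intro hsub x hx
      have : f x ∈ b.image f := hsub (Finset.mem_image_of_mem f hx)
      obtain ⟨x', hx', hfx⟩ := Finset.mem_image.mp this
      rwa [← hinj x' (hb hx') x (hS hx) hfx]
    · intro hsub
      exact Finset.image_subset_image hsub
  refine ⟨B₀.image (fun b => b.image f), ?_, ?_⟩
  · intro b hb
    obtain ⟨b₀, hb₀, rfl⟩ := Finset.mem_image.mp hb
    obtain ⟨hb₀X, hb₀k⟩ := hB₀ b₀ hb₀
    constructor
    · intro y hy
      obtain ⟨x, hx, rfl⟩ := Finset.mem_image.mp hy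
      exact hfmem x (hb₀X hx)
    · rw [Finset.card_image_of_injOn, hb₀k]
      intro x hx y hy
      exact hinj x (hb₀X hx) y (hb₀X hy)
  · intro T hT hTt
    set T₀ := X₀.filter (fun x => f x ∈ T) with hT₀
    have hT₀X : T₀ ⊆ X₀ := Finset.filter_subset _ _
    have himg : T₀.image f = T := by
      apply Finset.Subset.antisymm
      · intro y hy
        obtain ⟨x, hx, rfl⟩ := Finset.mem_image.mp hy
        exact (Finset.mem_filter.mp hx).2
      · intro y hy
        obtain ⟨x, hx, rfl⟩ := hsurj y (hT hy)
        exact Finset.mem_image_of_mem f (Finset.mem_filter.mpr ⟨hx, hy⟩)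
    have hT₀c : T₀.card = t := by
      rw [← hTt, ← himg, Finset.card_image_of_injOn]
      intro x hx y hy
      exact hinj x (hT₀X hx) y (hT₀X hy)
    rw [← hl₀ T₀ hT₀X hT₀c]
    refine (Finset.card_bij (fun b _ => b.image f) ?_ ?_ ?_).symm
    · intro b hb
      rw [Finset.mem_filter] at hb ⊢
      refine ⟨Finset.mem_image_of_mem _ hb.1, ?_⟩
      rw [← himg]
      exact Finset.image_subset_image hb.2
    · intro b hb b' hb' heq
      rw [Finset.mem_filter] at hb hb'
      have h1 := (hB₀ b hb.1).1
      have h2 := (hB₀ b' hb'.1).1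
      have heq' : b.image f = b'.image f := heq
      exact Finset.Subset.antisymm
        ((himgss b h1 b' h2).mp (le_of_eq heq'))
        ((himgss b' h2 b h1).mp (le_of_eq heq'.symm))
    · intro b'' hb''
      rw [Finset.mem_filter] at hb''
      obtain ⟨b, hb, rfl⟩ := Finset.mem_image.mp hb''.1
      refine ⟨b, Finset.mem_filter.mpr ⟨hb, ?_⟩, rfl⟩
      have := hb''.2
      rw [← himg] at this
      exact (himgss T₀ hT₀X b (hB₀ b hb).1).mp this


lemma blk_mem (X₁ X₂ : Finset ℕ) (hd : Disjoint X₁ X₂)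
    (F G : Finset (Finset ℕ)) (a c : ℕ)
    (hF : ∀ A ∈ F, A ⊆ X₁ ∧ A.card = a) (hG : ∀ C ∈ G, C ⊆ X₂ ∧ C.card = c) :
    ∀ b ∈ (F ×ˢ G).image (fun p => p.1 ∪ p.2),
      b ⊆ X₁ ∪ X₂ ∧ b.card = a + c ∧ (b ∩ X₁).card = a := by
  intro b hb
  obtain ⟨p, hp, rfl⟩ := Finset.mem_image.mp hb
  rw [Finset.mem_product] at hp
  obtain ⟨hA, hAc⟩ := hF p.1 hp.1
  obtain ⟨hC, hCc⟩ := hG p.2 hp.2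
  have hdisj : Disjoint p.1 p.2 := Finset.disjoint_of_subset_left hA
    (Finset.disjoint_of_subset_right hC hd)
  have hC1 : Disjoint p.2 X₁ := Finset.disjoint_of_subset_left hC hd.symm
  have hint : (p.1 ∪ p.2) ∩ X₁ = p.1 := by
    rw [Finset.union_inter_distrib_right, Finset.inter_eq_left.mpr hA,
      Finset.disjoint_iff_inter_eq_empty.mp hC1, Finset.union_empty]
  refine ⟨Finset.union_subset (hA.trans Finset.subset_union_left)
    (hC.trans Finset.subset_union_right), ?_, by rw [hint, hAc]⟩
  rw [Finset.card_union_of_disjoint hdisj, hAc, hCc]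

theorem designExists_5_36_10_542
    (h1 : SimpleDesignExists 5 18 6 5)
    (h2 : SimpleDesignExists 5 18 7 6)
    (h3 : SimpleDesignExists 5 18 8 60)
    (h4 : SimpleDesignExists 5 18 9 210)
    (h5 : SimpleDesignExists 5 18 10 990)
    : SimpleDesignExists 5 36 10 34146 := by
  have hX₁c : (Finset.range 18).card = 18 := Finset.card_range 18
  have hX₂c : ((Finset.range 18).image (· + 18)).card = 18 := by
    rw [Finset.card_image_of_injective _ (add_left_injective 18), Finset.card_range]
  set X₁ : Finset ℕ := Finset.range 18
  set X₂ : Finset ℕ := (Finset.range 18).image (· + 18)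
  have hd : Disjoint X₁ X₂ := by
    rw [Finset.disjoint_left]
    intro x hx hx2
    rw [Finset.mem_range] at hx
    simp only [X₂, Finset.mem_image, Finset.mem_range] at hx2
    omega
  obtain ⟨D6, hD6b, hD6l⟩ := transport h1 X₁ hX₁c
  obtain ⟨E6, hE6b, hE6l⟩ := transport h1 X₂ hX₂c
  obtain ⟨D7, hD7b, hD7l⟩ := transport h2 X₁ hX₁c
  obtain ⟨E7, hE7b, hE7l⟩ := transport h2 X₂ hX₂c
  obtain ⟨D8, hD8b, hD8l⟩ := transport h3 X₁ hX₁c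
  obtain ⟨E8, hE8b, hE8l⟩ := transport h3 X₂ hX₂c
  obtain ⟨D9, hD9b, hD9l⟩ := transport h4 X₁ hX₁c
  obtain ⟨E9, hE9b, hE9l⟩ := transport h4 X₂ hX₂c
  obtain ⟨D10, hD10b, hD10l⟩ := transport h5 X₁ hX₁c
  obtain ⟨E10, hE10b, hE10l⟩ := transport h5 X₂ hX₂c
  have mem0 := blk_mem X₁ X₂ hd (X₁.powersetCard 0) E10 0 10 (fun A hA => Finset.mem_powersetCard.mp hA) hE10b
  have mem1 := blk_mem X₁ X₂ hd (X₁.powersetCard 1) E9 1 9 (fun A hA => Finset.mem_powersetCard.mp hA) hE9b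
  have mem2 := blk_mem X₁ X₂ hd (X₁.powersetCard 2) E8 2 8 (fun A hA => Finset.mem_powersetCard.mp hA) hE8b
  have mem3 := blk_mem X₁ X₂ hd (X₁.powersetCard 3) E7 3 7 (fun A hA => Finset.mem_powersetCard.mp hA) hE7b
  have mem4 := blk_mem X₁ X₂ hd (X₁.powersetCard 4) E6 4 6 (fun A hA => Finset.mem_powersetCard.mp hA) hE6b
  have mem6 := blk_mem X₁ X₂ hd D6 (X₂.powersetCard 4) 6 4 hD6b (fun C hC => Finset.mem_powersetCard.mp hC)
  have mem7 := blk_mem X₁ X₂ hd D7 (X₂.powersetCard 3) 7 3 hD7b (fun C hC => Finset.mem_powersetCard.mp hC)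
  have mem8 := blk_mem X₁ X₂ hd D8 (X₂.powersetCard 2) 8 2 hD8b (fun C hC => Finset.mem_powersetCard.mp hC)
  have mem9 := blk_mem X₁ X₂ hd D9 (X₂.powersetCard 1) 9 1 hD9b (fun C hC => Finset.mem_powersetCard.mp hC)
  have mem10 := blk_mem X₁ X₂ hd D10 (X₂.powersetCard 0) 10 0 hD10b (fun C hC => Finset.mem_powersetCard.mp hC)
  refine ⟨X₁ ∪ X₂, (((X₁.powersetCard 0) ×ˢ E10).image fun p => p.1 ∪ p.2) ∪ (((X₁.powersetCard 1) ×ˢ E9).image fun p => p.1 ∪ p.2) ∪ (((X₁.powersetCard 2) ×ˢ E8).image fun p => p.1 ∪ p.2) ∪ (((X₁.powersetCard 3) ×ˢ E7).image fun p => p.1 ∪ p.2) ∪ (((X₁.powersetCard 4) ×ˢ E6).image fun p => p.1 ∪ p.2) ∪ ((D6 ×ˢ (X₂.powersetCard 4)).image fun p => p.1 ∪ p.2) ∪ ((D7 ×ˢ (X₂.powersetCard 3)).image fun p => p.1 ∪ p.2) ∪ ((D8 ×ˢ (X₂.powersetCard 2)).image fun p => p.1 ∪ p.2) ∪ ((D9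 ×ˢ (X₂.powersetCard 1)).image fun p => p.1 ∪ p.2) ∪ ((D10 ×ˢ (X₂.powersetCard 0)).image fun p => p.1 ∪ p.2), ?_, ?_, ?_⟩
  · rw [Finset.card_union_of_disjoint hd, hX₁c, hX₂c]
  · intro b hb
    simp only [Finset.mem_union] at hb
    rcases hb with (((((((((h|h)|h)|h)|h)|h)|h)|h)|h)|h)
    · exact ⟨(mem0 b h).1, by have := (mem0 b h).2.1; omega⟩
    · exact ⟨(mem1 b h).1, by have := (mem1 b h).2.1; omega⟩
    · exact ⟨(mem2 b h).1, by have := (mem2 b h).2.1; omega⟩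
    · exact ⟨(mem3 b h).1, by have := (mem3 b h).2.1; omega⟩
    · exact ⟨(mem4 b h).1, by have := (mem4 b h).2.1; omega⟩
    · exact ⟨(mem6 b h).1, by have := (mem6 b h).2.1; omega⟩
    · exact ⟨(mem7 b h).1, by have := (mem7 b h).2.1; omega⟩
    · exact ⟨(mem8 b h).1, by have := (mem8 b h).2.1; omega⟩
    · exact ⟨(mem9 b h).1, by have := (mem9 b h).2.1; omega⟩
    · exact ⟨(mem10 b h).1, by have := (mem10 b h).2.1; omega⟩
  · intro T hT hT5
    have hT₁X : T ∩ X₁ ⊆ X₁ := Finset.inter_subset_right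
    have hT₂X : T ∩ X₂ ⊆ X₂ := Finset.inter_subset_right
    have hdT : Disjoint (T ∩ X₁) (T ∩ X₂) :=
      Finset.disjoint_of_subset_left hT₁X (Finset.disjoint_of_subset_right hT₂X hd)
    have hsplit : (T ∩ X₁) ∪ (T ∩ X₂) = T := by
      rw [← Finset.inter_union_distrib_left, Finset.inter_eq_left.mpr hT]
    have hsum : (T ∩ X₁).card + (T ∩ X₂).card = 5 := by
      rw [← Finset.card_union_of_disjoint hdT, hsplit, hT5]
    have hT₂c : (T ∩ X₂).card = 5 - (T ∩ X₁).card := by omega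
    simp only [Finset.filter_union]
    have f0 : ∀ b ∈ ((((X₁.powersetCard 0) ×ˢ E10).image fun p => p.1 ∪ p.2)).filter (fun b => T ⊆ b), (b ∩ X₁).card = 0 :=
      fun b hb => (mem0 b (Finset.mem_filter.mp hb).1).2.2
    have f1 : ∀ b ∈ ((((X₁.powersetCard 1) ×ˢ E9).image fun p => p.1 ∪ p.2)).filter (fun b => T ⊆ b), (b ∩ X₁).card = 1 :=
      fun b hb => (mem1 b (Finset.mem_filter.mp hb).1).2.2
    have f2 : ∀ b ∈ ((((X₁.powersetCard 2) ×ˢ E8).image fun p => p.1 ∪ p.2)).filter (fun b => T ⊆ b), (b ∩ X₁).card = 2 :=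
      fun b hb => (mem2 b (Finset.mem_filter.mp hb).1).2.2
    have f3 : ∀ b ∈ ((((X₁.powersetCard 3) ×ˢ E7).image fun p => p.1 ∪ p.2)).filter (fun b => T ⊆ b), (b ∩ X₁).card = 3 :=
      fun b hb => (mem3 b (Finset.mem_filter.mp hb).1).2.2
    have f4 : ∀ b ∈ ((((X₁.powersetCard 4) ×ˢ E6).image fun p => p.1 ∪ p.2)).filter (fun b => T ⊆ b), (b ∩ X₁).card = 4 :=
      fun b hb => (mem4 b (Finset.mem_filter.mp hb).1).2.2
    have f6 : ∀ b ∈ (((D6 ×ˢ (X₂.powersetCard 4)).image fun p => p.1 ∪ p.2)).filter (fun b => T ⊆ b), (b ∩ X₁).card = 6 :=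
      fun b hb => (mem6 b (Finset.mem_filter.mp hb).1).2.2
    have f7 : ∀ b ∈ (((D7 ×ˢ (X₂.powersetCard 3)).image fun p => p.1 ∪ p.2)).filter (fun b => T ⊆ b), (b ∩ X₁).card = 7 :=
      fun b hb => (mem7 b (Finset.mem_filter.mp hb).1).2.2
    have f8 : ∀ b ∈ (((D8 ×ˢ (X₂.powersetCard 2)).image fun p => p.1 ∪ p.2)).filter (fun b => T ⊆ b), (b ∩ X₁).card = 8 :=
      fun b hb => (mem8 b (Finset.mem_filter.mp hb).1).2.2
    have f9 : ∀ b ∈ (((D9 ×ˢ (X₂.powersetCard 1)).image fun p => p.1 ∪ p.2)).filter (fun b => T ⊆ b), (b ∩ X₁).card = 9 :=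
      fun b hb => (mem9 b (Finset.mem_filter.mp hb).1).2.2
    have f10 : ∀ b ∈ (((D10 ×ˢ (X₂.powersetCard 0)).image fun p => p.1 ∪ p.2)).filter (fun b => T ⊆ b), (b ∩ X₁).card = 10 :=
      fun b hb => (mem10 b (Finset.mem_filter.mp hb).1).2.2
    rw [card_union10 X₁ _ _ _ _ _ _ _ _ _ _ f0 f1 f2 f3 f4 f6 f7 f8 f9 f10]
    have pc0 := piece_count X₁ X₂ hd (X₁.powersetCard 0) E10 (fun A hA => (Finset.mem_powersetCard.mp hA).1) (fun C hC => (hE10b C hC).1) T hT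
    have pc1 := piece_count X₁ X₂ hd (X₁.powersetCard 1) E9 (fun A hA => (Finset.mem_powersetCard.mp hA).1) (fun C hC => (hE9b C hC).1) T hT
    have pc2 := piece_count X₁ X₂ hd (X₁.powersetCard 2) E8 (fun A hA => (Finset.mem_powersetCard.mp hA).1) (fun C hC => (hE8b C hC).1) T hT
    have pc3 := piece_count X₁ X₂ hd (X₁.powersetCard 3) E7 (fun A hA => (Finset.mem_powersetCard.mp hA).1) (fun C hC => (hE7b C hC).1) T hT
    have pc4 := piece_count X₁ X₂ hd (X₁.powersetCard 4) E6 (fun A hA => (Finset.mem_powersetCard.mp hA).1) (fun C hC => (hE6b C hC).1) T hT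
    have pc6 := piece_count X₁ X₂ hd D6 (X₂.powersetCard 4) (fun A hA => (hD6b A hA).1) (fun C hC => (Finset.mem_powersetCard.mp hC).1) T hT
    have pc7 := piece_count X₁ X₂ hd D7 (X₂.powersetCard 3) (fun A hA => (hD7b A hA).1) (fun C hC => (Finset.mem_powersetCard.mp hC).1) T hT
    have pc8 := piece_count X₁ X₂ hd D8 (X₂.powersetCard 2) (fun A hA => (hD8b A hA).1) (fun C hC => (Finset.mem_powersetCard.mp hC).1) T hT
    have pc9 := piece_count X₁ X₂ hd D9 (X₂.powersetCard 1) (fun A hA => (hD9b A hA).1) (fun C hC => (Finset.mem_powersetCard.mp hC).1) T hT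
    have pc10 := piece_count X₁ X₂ hd D10 (X₂.powersetCard 0) (fun A hA => (hD10b A hA).1) (fun C hC => (Finset.mem_powersetCard.mp hC).1) T hT
    rw [pc0, pc1, pc2, pc3, pc4, pc6, pc7, pc8, pc9, pc10]
    have hc6 := design_count X₁ D6 18 6 5 hX₁c hD6b hD6l (T ∩ X₁) hT₁X (by omega)
    have he6 := design_count X₂ E6 18 6 5 hX₂c hE6b hE6l (T ∩ X₂) hT₂X (by omega)
    have hc7 := design_count X₁ D7 18 7 6 hX₁c hD7b hD7l (T ∩ X₁) hT₁X (by omega)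
    have he7 := design_count X₂ E7 18 7 6 hX₂c hE7b hE7l (T ∩ X₂) hT₂X (by omega)
    have hc8 := design_count X₁ D8 18 8 60 hX₁c hD8b hD8l (T ∩ X₁) hT₁X (by omega)
    have he8 := design_count X₂ E8 18 8 60 hX₂c hE8b hE8l (T ∩ X₂) hT₂X (by omega)
    have hc9 := design_count X₁ D9 18 9 210 hX₁c hD9b hD9l (T ∩ X₁) hT₁X (by omega)
    have he9 := design_count X₂ E9 18 9 210 hX₂c hE9b hE9l (T ∩ X₂) hT₂X (by omega)
    have hc10 := design_count X₁ D10 18 10 990 hX₁c hD10b hD10l (T ∩ X₁) hT₁X (by omega)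
    have he10 := design_count X₂ E10 18 10 990 hX₂c hE10b hE10l (T ∩ X₂) hT₂X (by omega)
    rw [hT₂c] at he6 he7 he8 he9 he10
    have hL0p : (T ∩ X₁).card ≤ 0 → ((X₁.powersetCard 0).filter (fun A => T ∩ X₁ ⊆ A)).card
        = Nat.choose (18 - (T ∩ X₁).card) (0 - (T ∩ X₁).card) := fun h => by
      rw [count_subsets X₁ (T ∩ X₁) 0 hT₁X h, hX₁c]
    have hL0n : 0 < (T ∩ X₁).card → ((X₁.powersetCard 0).filter (fun A => T ∩ X₁ ⊆ A)).card = 0 :=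
      fun h => complete_count_lt X₁ (T ∩ X₁) 0 h
    have hL1p : (T ∩ X₁).card ≤ 1 → ((X₁.powersetCard 1).filter (fun A => T ∩ X₁ ⊆ A)).card
        = Nat.choose (18 - (T ∩ X₁).card) (1 - (T ∩ X₁).card) := fun h => by
      rw [count_subsets X₁ (T ∩ X₁) 1 hT₁X h, hX₁c]
    have hL1n : 1 < (T ∩ X₁).card → ((X₁.powersetCard 1).filter (fun A => T ∩ X₁ ⊆ A)).card = 0 :=
      fun h => complete_count_lt X₁ (T ∩ X₁) 1 h
    have hL2p : (T ∩ X₁).card ≤ 2 → ((X₁.powersetCard 2).filter (fun A => T ∩ X₁ ⊆ A)).card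
        = Nat.choose (18 - (T ∩ X₁).card) (2 - (T ∩ X₁).card) := fun h => by
      rw [count_subsets X₁ (T ∩ X₁) 2 hT₁X h, hX₁c]
    have hL2n : 2 < (T ∩ X₁).card → ((X₁.powersetCard 2).filter (fun A => T ∩ X₁ ⊆ A)).card = 0 :=
      fun h => complete_count_lt X₁ (T ∩ X₁) 2 h
    have hL3p : (T ∩ X₁).card ≤ 3 → ((X₁.powersetCard 3).filter (fun A => T ∩ X₁ ⊆ A)).card
        = Nat.choose (18 - (T ∩ X₁).card) (3 - (T ∩ X₁).card) := fun h => by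
      rw [count_subsets X₁ (T ∩ X₁) 3 hT₁X h, hX₁c]
    have hL3n : 3 < (T ∩ X₁).card → ((X₁.powersetCard 3).filter (fun A => T ∩ X₁ ⊆ A)).card = 0 :=
      fun h => complete_count_lt X₁ (T ∩ X₁) 3 h
    have hL4p : (T ∩ X₁).card ≤ 4 → ((X₁.powersetCard 4).filter (fun A => T ∩ X₁ ⊆ A)).card
        = Nat.choose (18 - (T ∩ X₁).card) (4 - (T ∩ X₁).card) := fun h => by
      rw [count_subsets X₁ (T ∩ X₁) 4 hT₁X h, hX₁c]
    have hL4n : 4 < (T ∩ X₁).card → ((X₁.powersetCard 4).filter (fun A => T ∩ X₁ ⊆ A)).card = 0 :=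
      fun h => complete_count_lt X₁ (T ∩ X₁) 4 h
    have hR0p : 5 - (T ∩ X₁).card ≤ 0 → ((X₂.powersetCard 0).filter (fun C => T ∩ X₂ ⊆ C)).card
        = Nat.choose (18 - (5 - (T ∩ X₁).card)) (0 - (5 - (T ∩ X₁).card)) := fun h => by
      rw [count_subsets X₂ (T ∩ X₂) 0 hT₂X (by omega), hX₂c, hT₂c]
    have hR0n : 0 < 5 - (T ∩ X₁).card → ((X₂.powersetCard 0).filter (fun C => T ∩ X₂ ⊆ C)).card = 0 :=
      fun h => complete_count_lt X₂ (T ∩ X₂) 0 (by omega)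
    have hR1p : 5 - (T ∩ X₁).card ≤ 1 → ((X₂.powersetCard 1).filter (fun C => T ∩ X₂ ⊆ C)).card
        = Nat.choose (18 - (5 - (T ∩ X₁).card)) (1 - (5 - (T ∩ X₁).card)) := fun h => by
      rw [count_subsets X₂ (T ∩ X₂) 1 hT₂X (by omega), hX₂c, hT₂c]
    have hR1n : 1 < 5 - (T ∩ X₁).card → ((X₂.powersetCard 1).filter (fun C => T ∩ X₂ ⊆ C)).card = 0 :=
      fun h => complete_count_lt X₂ (T ∩ X₂) 1 (by omega)
    have hR2p : 5 - (T ∩ X₁).card ≤ 2 → ((X₂.powersetCard 2).filter (fun C => T ∩ X₂ ⊆ C)).card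
        = Nat.choose (18 - (5 - (T ∩ X₁).card)) (2 - (5 - (T ∩ X₁).card)) := fun h => by
      rw [count_subsets X₂ (T ∩ X₂) 2 hT₂X (by omega), hX₂c, hT₂c]
    have hR2n : 2 < 5 - (T ∩ X₁).card → ((X₂.powersetCard 2).filter (fun C => T ∩ X₂ ⊆ C)).card = 0 :=
      fun h => complete_count_lt X₂ (T ∩ X₂) 2 (by omega)
    have hR3p : 5 - (T ∩ X₁).card ≤ 3 → ((X₂.powersetCard 3).filter (fun C => T ∩ X₂ ⊆ C)).card
        = Nat.choose (18 - (5 - (T ∩ X₁).card)) (3 - (5 - (T ∩ X₁).card)) := fun h => by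
      rw [count_subsets X₂ (T ∩ X₂) 3 hT₂X (by omega), hX₂c, hT₂c]
    have hR3n : 3 < 5 - (T ∩ X₁).card → ((X₂.powersetCard 3).filter (fun C => T ∩ X₂ ⊆ C)).card = 0 :=
      fun h => complete_count_lt X₂ (T ∩ X₂) 3 (by omega)
    have hR4p : 5 - (T ∩ X₁).card ≤ 4 → ((X₂.powersetCard 4).filter (fun C => T ∩ X₂ ⊆ C)).card
        = Nat.choose (18 - (5 - (T ∩ X₁).card)) (4 - (5 - (T ∩ X₁).card)) := fun h => by
      rw [count_subsets X₂ (T ∩ X₂) 4 hT₂X (by omega), hX₂c, hT₂c]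
    have hR4n : 4 < 5 - (T ∩ X₁).card → ((X₂.powersetCard 4).filter (fun C => T ∩ X₂ ⊆ C)).card = 0 :=
      fun h => complete_count_lt X₂ (T ∩ X₂) 4 (by omega)
    exact main_arith (T ∩ X₁).card (by omega) _ _ _ _ _ _ _ _ _ _ _ _ _ _ _ _ _ _ _ _ hL0p hL0n hL1p hL1n hL2p hL2n hL3p hL3n hL4p hL4n hR0p hR0n hR1p hR1n hR2p hR2n hR3p hR3n hR4p hR4n hc6 hc7 hc8 hc9 hc10 he6 he7 he8 he9 he10
end

section
/- Suppose there exist simple 6-(23,7,5), 6-(23,8,40), 6-(23,9,200), 6-(23,10,700), 6-(23,11,1820), 6-(23,12,3640) and 6-(23,13,5720) designs. Then there exists a simple 6-(46, 13, 5483400) design (note 5483400 = 3515 × 1560). -/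
/-- Transport a design structure along a bijection between ground sets. -/
lemma design_transport (t k lam : ℕ) (X Y : Finset ℕ) (hcard : X.card = Y.card)
    (B : Finset (Finset ℕ))
    (hB : ∀ b ∈ B, b ⊆ X ∧ b.card = k)
    (hdes : ∀ T ⊆ X, T.card = t → (B.filter (fun b => T ⊆ b)).card = lam) :
    ∃ B' : Finset (Finset ℕ),
      (∀ b ∈ B', b ⊆ Y ∧ b.card = k) ∧
      (∀ T ⊆ Y, T.card = t → (B'.filter (fun b => T ⊆ b)).card = lam) := by
  have hc : Fintype.card X = Fintype.card Y := by
    simpa [Fintype.card_coe] using hcard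
  let e : X ≃ Y := Fintype.equivOfCardEq hc
  set f : ℕ → ℕ := fun n => if h : n ∈ X then (e ⟨n, h⟩ : ℕ) else 0 with hf
  set g : ℕ → ℕ := fun n => if h : n ∈ Y then (e.symm ⟨n, h⟩ : ℕ) else 0 with hg
  have hfY : ∀ x ∈ X, f x ∈ Y := by
    intro x hx; simp only [hf, dif_pos hx]; exact (e ⟨x, hx⟩).2
  have hgX : ∀ y ∈ Y, g y ∈ X := by
    intro y hy; simp only [hg, dif_pos hy]; exact (e.symm ⟨y, hy⟩).2
  have hgf : ∀ x ∈ X, g (f x) = x := by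
    intro x hx
    have h1 : f x ∈ Y := hfY x hx
    simp only [hf, hg, dif_pos hx] at h1 ⊢
    rw [dif_pos h1]
    have : (⟨(e ⟨x, hx⟩ : ℕ), h1⟩ : Y) = e ⟨x, hx⟩ := rfl
    rw [this, Equiv.symm_apply_apply]
  have hfg : ∀ y ∈ Y, f (g y) = y := by
    intro y hy
    have h1 : g y ∈ X := hgX y hy
    simp only [hg, hf, dif_pos hy] at h1 ⊢
    rw [dif_pos h1]
    have : (⟨(e.symm ⟨y, hy⟩ : ℕ), h1⟩ : X) = e.symm ⟨y, hy⟩ := rfl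
    rw [this, Equiv.apply_symm_apply]
  -- image of a subset of X under f, back and forth
  have himg_back : ∀ b : Finset ℕ, b ⊆ X → (b.image f).image g = b := by
    intro b hb
    rw [Finset.image_image]
    rw [show b = b.image id from (Finset.image_id).symm]
    rw [Finset.image_image]
    apply Finset.image_congr
    intro x hx
    simp only [Function.comp, id]
    exact hgf x (hb (by simpa using hx))
  have himg_back' : ∀ T : Finset ℕ, T ⊆ Y → (T.image g).image f = T := by
    intro T hT
    rw [Finset.image_image]
    rw [show T = T.image id from (Finset.image_id).symm]
    rw [Finset.image_image]
    apply Finset.image_congr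
    intro x hx
    simp only [Function.comp, id]
    exact hfg x (hT (by simpa using hx))
  refine ⟨B.image (Finset.image f), ?_, ?_⟩
  · intro b hb
    obtain ⟨b0, hb0, rfl⟩ := Finset.mem_image.mp hb
    obtain ⟨hsub, hcardb⟩ := hB b0 hb0
    constructor
    · intro y hy
      obtain ⟨x, hx, rfl⟩ := Finset.mem_image.mp hy
      exact hfY x (hsub hx)
    · rw [Finset.card_image_of_injOn, hcardb]
      intro x hx x' hx' hxy
      have := congrArg g hxy
      rwa [hgf x (hsub hx), hgf x' (hsub hx')] at this
  · intro T hT hTcard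
    have hS : T.image g ⊆ X := by
      intro x hx
      obtain ⟨y, hy, rfl⟩ := Finset.mem_image.mp hx
      exact hgX y (hT hy)
    have hScard : (T.image g).card = t := by
      rw [Finset.card_image_of_injOn, hTcard]
      intro x hx x' hx' hxy
      have := congrArg f hxy
      rwa [hfg x (hT hx), hfg x' (hT hx')] at this
    rw [← hdes (T.image g) hS hScard]
    rw [Finset.filter_image]
    rw [Finset.card_image_of_injOn]
    · congr 1
      apply Finset.filter_congr
      intro b hb
      have hbX := (hB b hb).1
      constructor
      · intro h
        have := Finset.image_subset_image (f := g) h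
        rwa [himg_back b hbX] at this
      · intro h
        have := Finset.image_subset_image (f := f) h
        rwa [himg_back' T hT] at this
    · intro b1 hb1 b2 hb2 hbb
      have h1 := (hB b1 (Finset.mem_filter.mp hb1).1).1
      have h2 := (hB b2 (Finset.mem_filter.mp hb2).1).1
      have := congrArg (Finset.image g) hbb
      rwa [himg_back b1 h1, himg_back b2 h2] at this

/-- A t-design is an s-design for s ≤ t: counting identity. -/
lemma design_lower (t k lam s : ℕ) (X : Finset ℕ) (B : Finset (Finset ℕ))
    (hB : ∀ b ∈ B, b ⊆ X ∧ b.card = k)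
    (hdes : ∀ T ⊆ X, T.card = t → (B.filter (fun b => T ⊆ b)).card = lam)
    (S : Finset ℕ) (hSX : S ⊆ X) (hScard : S.card = s) (hst : s ≤ t) :
    (B.filter (fun b => S ⊆ b)).card * (k - s).choose (t - s)
      = lam * (X.card - s).choose (t - s) := by
  have key : ∀ b ∈ B.filter (fun b => S ⊆ b),
      ((X \ S).powersetCard (t - s)).filter (fun U => U ⊆ b) = (b \ S).powersetCard (t - s) := by
    intro b hb
    obtain ⟨hbB, hSb⟩ := Finset.mem_filter.mp hb
    have hbX := (hB b hbB).1
    ext U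
    simp only [Finset.mem_filter, Finset.mem_powersetCard]
    constructor
    · rintro ⟨⟨hUXS, hUc⟩, hUb⟩
      refine ⟨?_, hUc⟩
      intro x hx
      exact Finset.mem_sdiff.mpr ⟨hUb hx, (Finset.mem_sdiff.mp (hUXS hx)).2⟩
    · rintro ⟨hUbS, hUc⟩
      refine ⟨⟨?_, hUc⟩, fun x hx => (Finset.mem_sdiff.mp (hUbS hx)).1⟩
      intro x hx
      have := Finset.mem_sdiff.mp (hUbS hx)
      exact Finset.mem_sdiff.mpr ⟨hbX this.1, this.2⟩
  have lhs_eq : (B.filter (fun b => S ⊆ b)).card * (k - s).choose (t - s)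
      = ∑ b ∈ B.filter (fun b => S ⊆ b),
          (((X \ S).powersetCard (t - s)).filter (fun U => U ⊆ b)).card := by
    rw [Finset.sum_congr rfl (fun b hb => by
      rw [key b hb, Finset.card_powersetCard,
        Finset.card_sdiff_of_subset (Finset.mem_filter.mp hb).2, (hB b (Finset.mem_filter.mp hb).1).2,
        hScard])]
    rw [Finset.sum_const, smul_eq_mul]
  rw [lhs_eq]
  have swap : ∑ b ∈ B.filter (fun b => S ⊆ b),
        (((X \ S).powersetCard (t - s)).filter (fun U => U ⊆ b)).card
      = ∑ U ∈ (X \ S).powersetCard (t - s),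
          ((B.filter (fun b => S ⊆ b)).filter (fun b => U ⊆ b)).card := by
    simp only [Finset.card_filter]
    exact Finset.sum_comm
  rw [swap]
  have each : ∀ U ∈ (X \ S).powersetCard (t - s),
      ((B.filter (fun b => S ⊆ b)).filter (fun b => U ⊆ b)).card = lam := by
    intro U hU
    obtain ⟨hUXS, hUc⟩ := Finset.mem_powersetCard.mp hU
    have hdisj : Disjoint S U := by
      rw [Finset.disjoint_right]
      intro x hx
      exact (Finset.mem_sdiff.mp (hUXS hx)).2
    have hsub : S ∪ U ⊆ X := by
      intro x hx
      rcases Finset.mem_union.mp hx with h | h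
      · exact hSX h
      · exact (Finset.mem_sdiff.mp (hUXS h)).1
    have hcard : (S ∪ U).card = t := by
      rw [Finset.card_union_of_disjoint hdisj, hScard, hUc]
      omega
    rw [Finset.filter_filter]
    rw [← hdes (S ∪ U) hsub hcard]
    congr 1
    apply Finset.filter_congr
    intro b _
    simp [Finset.union_subset_iff]
  rw [Finset.sum_congr rfl each, Finset.sum_const, smul_eq_mul,
    Finset.card_powersetCard, Finset.card_sdiff_of_subset hSX, hScard, mul_comm]

/-- Number of m-subsets of Y containing a fixed subset u. -/
lemma powersetCard_filter_count (Y u : Finset ℕ) (m : ℕ) (huY : u ⊆ Y) (hum : u.card ≤ m) :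
    ((Y.powersetCard m).filter (fun b => u ⊆ b)).card = (Y.card - u.card).choose (m - u.card) := by
  have himg : (Y.powersetCard m).filter (fun b => u ⊆ b)
      = ((Y \ u).powersetCard (m - u.card)).image (fun c => c ∪ u) := by
    ext b
    simp only [Finset.mem_filter, Finset.mem_powersetCard, Finset.mem_image]
    constructor
    · rintro ⟨⟨hbY, hbc⟩, hub⟩
      refine ⟨b \ u, ⟨?_, ?_⟩, ?_⟩
      · intro x hx
        have := Finset.mem_sdiff.mp hx
        exact Finset.mem_sdiff.mpr ⟨hbY this.1, this.2⟩
      · rw [Finset.card_sdiff_of_subset hub, hbc]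
      · rw [Finset.sdiff_union_self_eq_union, Finset.union_eq_left.mpr hub]
    · rintro ⟨c, ⟨hcYu, hcc⟩, rfl⟩
      have hdisj : Disjoint c u := by
        rw [Finset.disjoint_left]
        intro x hx
        exact (Finset.mem_sdiff.mp (hcYu hx)).2
      refine ⟨⟨?_, ?_⟩, Finset.subset_union_right⟩
      · intro x hx
        rcases Finset.mem_union.mp hx with h | h
        · exact (Finset.mem_sdiff.mp (hcYu h)).1
        · exact huY h
      · rw [Finset.card_union_of_disjoint hdisj, hcc]
        omega
  rw [himg, Finset.card_image_of_injOn, Finset.card_powersetCard, Finset.card_sdiff_of_subset huY]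
  intro c1 hc1 c2 hc2 h12
  have d1 : Disjoint c1 u := by
    rw [Finset.disjoint_left]
    intro x hx
    exact (Finset.mem_sdiff.mp ((Finset.mem_powersetCard.mp hc1).1 hx)).2
  have d2 : Disjoint c2 u := by
    rw [Finset.disjoint_left]
    intro x hx
    exact (Finset.mem_sdiff.mp ((Finset.mem_powersetCard.mp hc2).1 hx)).2
  have h12' : c1 ∪ u = c2 ∪ u := h12
  have : (c1 ∪ u) \ u = (c2 ∪ u) \ u := by rw [h12']
  rwa [Finset.union_sdiff_right, Finset.union_sdiff_right,
    Finset.sdiff_eq_self_of_disjoint d1, Finset.sdiff_eq_self_of_disjoint d2] at this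

/-- If u is too big, count is 0. -/
lemma powersetCard_filter_count_zero (Y u : Finset ℕ) (m : ℕ) (hum : m < u.card) :
    ((Y.powersetCard m).filter (fun b => u ⊆ b)).card = 0 := by
  rw [Finset.card_eq_zero, Finset.filter_eq_empty_iff]
  intro b hb
  intro hub
  have := Finset.card_le_card hub
  rw [(Finset.mem_powersetCard.mp hb).2] at this
  omega

/-- Filter count over the image of a product by union. -/
lemma prod_union_filter_card (X1 X2 : Finset ℕ) (hd : Disjoint X1 X2)
    (A1 A2 : Finset (Finset ℕ)) (hA1 : ∀ b ∈ A1, b ⊆ X1) (hA2 : ∀ b ∈ A2, b ⊆ X2)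
    (T : Finset ℕ) (hT : T ⊆ X1 ∪ X2) :
    (((A1 ×ˢ A2).image (fun p => p.1 ∪ p.2)).filter (fun b => T ⊆ b)).card
      = (A1.filter (fun b => T ∩ X1 ⊆ b)).card * (A2.filter (fun b => T ∩ X2 ⊆ b)).card := by
  have hinj : Set.InjOn (fun p : Finset ℕ × Finset ℕ => p.1 ∪ p.2) ↑(A1 ×ˢ A2) := by
    intro p hp q hq hpq
    rw [Finset.mem_coe, Finset.mem_product] at hp hq
    have hp1 := hA1 _ hp.1; have hp2 := hA2 _ hp.2
    have hq1 := hA1 _ hq.1; have hq2 := hA2 _ hq.2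
    have e1 : (p.1 ∪ p.2) ∩ X1 = p.1 := by
      rw [Finset.union_inter_distrib_right, Finset.inter_eq_left.mpr hp1,
        Finset.disjoint_iff_inter_eq_empty.mp (Finset.disjoint_of_subset_left hp2 hd.symm), Finset.union_empty]
    have e2 : (q.1 ∪ q.2) ∩ X1 = q.1 := by
      rw [Finset.union_inter_distrib_right, Finset.inter_eq_left.mpr hq1,
        Finset.disjoint_iff_inter_eq_empty.mp (Finset.disjoint_of_subset_left hq2 hd.symm), Finset.union_empty]
    have e3 : (p.1 ∪ p.2) ∩ X2 = p.2 := by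
      rw [Finset.union_inter_distrib_right, Finset.inter_eq_left.mpr hp2,
        Finset.disjoint_iff_inter_eq_empty.mp (Finset.disjoint_of_subset_left hp1 hd), Finset.empty_union]
    have e4 : (q.1 ∪ q.2) ∩ X2 = q.2 := by
      rw [Finset.union_inter_distrib_right, Finset.inter_eq_left.mpr hq2,
        Finset.disjoint_iff_inter_eq_empty.mp (Finset.disjoint_of_subset_left hq1 hd), Finset.empty_union]
    have hpq' : p.1 ∪ p.2 = q.1 ∪ q.2 := hpq
    have : p.1 = q.1 := by rw [← e1, ← e2, hpq']
    have h2 : p.2 = q.2 := by rw [← e3, ← e4, hpq']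
    exact Prod.ext this h2
  rw [Finset.filter_image, Finset.card_image_of_injOn
    (hinj.mono (by intro p hp; exact Finset.mem_coe.mpr (Finset.mem_of_mem_filter p (Finset.mem_coe.mp hp))))]
  have : (A1 ×ˢ A2).filter (fun p => T ⊆ p.1 ∪ p.2)
      = (A1.filter (fun b => T ∩ X1 ⊆ b)) ×ˢ (A2.filter (fun b => T ∩ X2 ⊆ b)) := by
    rw [← Finset.filter_product]
    apply Finset.filter_congr
    intro p hp
    simp only [Finset.mem_product] at hp
    have hp1 := hA1 _ hp.1; have hp2 := hA2 _ hp.2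
    constructor
    · intro h
      constructor
      · intro x hx
        obtain ⟨hxT, hxX1⟩ := Finset.mem_inter.mp hx
        rcases Finset.mem_union.mp (h hxT) with h' | h'
        · exact h'
        · exact absurd (hp2 h') (Finset.disjoint_left.mp hd hxX1)
      · intro x hx
        obtain ⟨hxT, hxX2⟩ := Finset.mem_inter.mp hx
        rcases Finset.mem_union.mp (h hxT) with h' | h'
        · exact absurd (hp1 h') (Finset.disjoint_left.mp hd.symm hxX2)
        · exact h'
    · rintro ⟨h1, h2⟩
      intro x hx
      rcases Finset.mem_union.mp (hT hx) with h' | h'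
      · exact Finset.mem_union_left _ (h1 (Finset.mem_inter.mpr ⟨hx, h'⟩))
      · exact Finset.mem_union_right _ (h2 (Finset.mem_inter.mpr ⟨hx, h'⟩))
  rw [this, Finset.card_product]

def lamf : ℕ → ℕ := fun j =>
  if j = 7 then 5 else if j = 8 then 40 else if j = 9 then 200 else if j = 10 then 700
  else if j = 11 then 1820 else if j = 12 then 3640 else if j = 13 then 5720 else 0

lemma sum_Icc_7_13 (f : ℕ → ℕ) :
    ∑ j ∈ Finset.Icc 7 13, f j = f 7 + f 8 + f 9 + f 10 + f 11 + f 12 + f 13 := by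
  rw [show (13:ℕ) = 12 + 1 from rfl, Finset.sum_Icc_succ_top (by norm_num)]
  rw [show (12:ℕ) = 11 + 1 from rfl, Finset.sum_Icc_succ_top (by norm_num)]
  rw [show (11:ℕ) = 10 + 1 from rfl, Finset.sum_Icc_succ_top (by norm_num)]
  rw [show (10:ℕ) = 9 + 1 from rfl, Finset.sum_Icc_succ_top (by norm_num)]
  rw [show (9:ℕ) = 8 + 1 from rfl, Finset.sum_Icc_succ_top (by norm_num)]
  rw [show (8:ℕ) = 7 + 1 from rfl, Finset.sum_Icc_succ_top (by norm_num)]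
  rw [Finset.Icc_self, Finset.sum_singleton]

set_option maxRecDepth 100000 in
set_option maxHeartbeats 3200000 in
lemma final_arith (i i2 : ℕ) (hii : i + i2 = 6) (d p q e : ℕ → ℕ)
    (hd : ∀ j, 7 ≤ j → j ≤ 13 → d j * (j - i).choose i2 = lamf j * (23 - i).choose i2)
    (hp : ∀ j, 7 ≤ j → j ≤ 13 →
      p j = if i2 ≤ 13 - j then (23 - i2).choose (13 - j - i2) else 0)
    (he : ∀ j, 7 ≤ j → j ≤ 13 → e j * (j - i2).choose i = lamf j * (23 - i2).choose i)
    (hq : ∀ j, 7 ≤ j → j ≤ 13 →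
      q j = if i ≤ 13 - j then (23 - i).choose (13 - j - i) else 0) :
    (∑ j ∈ Finset.Icc 7 13, d j * p j) + (∑ j ∈ Finset.Icc 7 13, q j * e j) = 5483400 := by
  have hi : i ≤ 6 := by omega
  obtain rfl : i2 = 6 - i := by omega
  rw [sum_Icc_7_13, sum_Icc_7_13]
  have D7 := hd 7 (by norm_num) (by norm_num)
  have D8 := hd 8 (by norm_num) (by norm_num)
  have D9 := hd 9 (by norm_num) (by norm_num)
  have D10 := hd 10 (by norm_num) (by norm_num)
  have D11 := hd 11 (by norm_num) (by norm_num)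
  have D12 := hd 12 (by norm_num) (by norm_num)
  have D13 := hd 13 (by norm_num) (by norm_num)
  have E7 := he 7 (by norm_num) (by norm_num)
  have E8 := he 8 (by norm_num) (by norm_num)
  have E9 := he 9 (by norm_num) (by norm_num)
  have E10 := he 10 (by norm_num) (by norm_num)
  have E11 := he 11 (by norm_num) (by norm_num)
  have E12 := he 12 (by norm_num) (by norm_num)
  have E13 := he 13 (by norm_num) (by norm_num)
  have P7 := hp 7 (by norm_num) (by norm_num)
  have P8 := hp 8 (by norm_num) (by norm_num)
  have P9 := hp 9 (by norm_num) (by norm_num)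
  have P10 := hp 10 (by norm_num) (by norm_num)
  have P11 := hp 11 (by norm_num) (by norm_num)
  have P12 := hp 12 (by norm_num) (by norm_num)
  have P13 := hp 13 (by norm_num) (by norm_num)
  have Q7 := hq 7 (by norm_num) (by norm_num)
  have Q8 := hq 8 (by norm_num) (by norm_num)
  have Q9 := hq 9 (by norm_num) (by norm_num)
  have Q10 := hq 10 (by norm_num) (by norm_num)
  have Q11 := hq 11 (by norm_num) (by norm_num)
  have Q12 := hq 12 (by norm_num) (by norm_num)
  have Q13 := hq 13 (by norm_num) (by norm_num)
  interval_cases i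
  all_goals norm_num [lamf, Nat.choose] at D7 D8 D9 D10 D11 D12 D13 E7 E8 E9 E10 E11 E12 E13 P7 P8 P9 P10 P11 P12 P13 Q7 Q8 Q9 Q10 Q11 Q12 Q13
  all_goals rw [P7, P8, P9, P10, P11, P12, P13, Q7, Q8, Q9, Q10, Q11, Q12, Q13]
  all_goals omega

/-- intersections of a disjoint union with the two sides. -/
lemma union_inter_eq (X1 X2 b1 b2 : Finset ℕ) (hd : Disjoint X1 X2)
    (h1 : b1 ⊆ X1) (h2 : b2 ⊆ X2) :
    (b1 ∪ b2) ∩ X1 = b1 ∧ (b1 ∪ b2) ∩ X2 = b2 := by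
  constructor
  · rw [Finset.union_inter_distrib_right, Finset.inter_eq_left.mpr h1,
      Finset.disjoint_iff_inter_eq_empty.mp (Finset.disjoint_of_subset_left h2 hd.symm),
      Finset.union_empty]
  · rw [Finset.union_inter_distrib_right, Finset.inter_eq_left.mpr h2,
      Finset.disjoint_iff_inter_eq_empty.mp (Finset.disjoint_of_subset_left h1 hd),
      Finset.empty_union]

lemma construction (X1 X2 : Finset ℕ) (h1c : X1.card = 23) (h2c : X2.card = 23)
    (hd : Disjoint X1 X2) (D1 D2 : ℕ → Finset (Finset ℕ))
    (hD1 : ∀ j, 7 ≤ j → j ≤ 13 → (∀ b ∈ D1 j, b ⊆ X1 ∧ b.card = j) ∧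
      (∀ T ⊆ X1, T.card = 6 → ((D1 j).filter (fun b => T ⊆ b)).card = lamf j))
    (hD2 : ∀ j, 7 ≤ j → j ≤ 13 → (∀ b ∈ D2 j, b ⊆ X2 ∧ b.card = j) ∧
      (∀ T ⊆ X2, T.card = 6 → ((D2 j).filter (fun b => T ⊆ b)).card = lamf j)) :
    ∃ B : Finset (Finset ℕ),
      (∀ b ∈ B, b ⊆ X1 ∪ X2 ∧ b.card = 13) ∧
      (∀ T ⊆ X1 ∪ X2, T.card = 6 → (B.filter (fun b => T ⊆ b)).card = 5483400) := by
  set F : ℕ → Finset (Finset ℕ) :=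
    fun j => ((D1 j) ×ˢ (X2.powersetCard (13 - j))).image (fun p => p.1 ∪ p.2) with hF
  set G : ℕ → Finset (Finset ℕ) :=
    fun j => ((X1.powersetCard (13 - j)) ×ˢ (D2 j)).image (fun p => p.1 ∪ p.2) with hG
  have hFmem : ∀ j, 7 ≤ j → j ≤ 13 → ∀ b ∈ F j,
      (b ∩ X1).card = j ∧ (b ∩ X2).card = 13 - j ∧ b ⊆ X1 ∪ X2 ∧ b.card = 13 := by
    intro j hj1 hj2 b hb
    obtain ⟨p, hp, rfl⟩ := Finset.mem_image.mp hb
    obtain ⟨hp1, hp2⟩ := Finset.mem_product.mp hp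
    obtain ⟨hp1X, hp1c⟩ := (hD1 j hj1 hj2).1 p.1 hp1
    obtain ⟨hp2X, hp2c⟩ := Finset.mem_powersetCard.mp hp2
    obtain ⟨e1, e2⟩ := union_inter_eq X1 X2 p.1 p.2 hd hp1X hp2X
    have hdisj : Disjoint p.1 p.2 :=
      Finset.disjoint_of_subset_left hp1X (Finset.disjoint_of_subset_right hp2X hd)
    refine ⟨by rw [e1, hp1c], by rw [e2, hp2c], ?_, ?_⟩
    · exact Finset.union_subset_union hp1X hp2X
    · rw [Finset.card_union_of_disjoint hdisj, hp1c, hp2c]; omega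
  have hGmem : ∀ j, 7 ≤ j → j ≤ 13 → ∀ b ∈ G j,
      (b ∩ X1).card = 13 - j ∧ (b ∩ X2).card = j ∧ b ⊆ X1 ∪ X2 ∧ b.card = 13 := by
    intro j hj1 hj2 b hb
    obtain ⟨p, hp, rfl⟩ := Finset.mem_image.mp hb
    obtain ⟨hp1, hp2⟩ := Finset.mem_product.mp hp
    obtain ⟨hp1X, hp1c⟩ := Finset.mem_powersetCard.mp hp1
    obtain ⟨hp2X, hp2c⟩ := (hD2 j hj1 hj2).1 p.2 hp2
    obtain ⟨e1, e2⟩ := union_inter_eq X1 X2 p.1 p.2 hd hp1X hp2X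
    have hdisj : Disjoint p.1 p.2 :=
      Finset.disjoint_of_subset_left hp1X (Finset.disjoint_of_subset_right hp2X hd)
    refine ⟨by rw [e1, hp1c], by rw [e2, hp2c], ?_, ?_⟩
    · exact Finset.union_subset_union hp1X hp2X
    · rw [Finset.card_union_of_disjoint hdisj, hp1c, hp2c]; omega
  refine ⟨(Finset.Icc 7 13).biUnion F ∪ (Finset.Icc 7 13).biUnion G, ?_, ?_⟩
  · intro b hb
    rcases Finset.mem_union.mp hb with h | h
    · obtain ⟨j, hj, hbj⟩ := Finset.mem_biUnion.mp h
      obtain ⟨hj1, hj2⟩ := Finset.mem_Icc.mp hj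
      exact ⟨(hFmem j hj1 hj2 b hbj).2.2.1, (hFmem j hj1 hj2 b hbj).2.2.2⟩
    · obtain ⟨j, hj, hbj⟩ := Finset.mem_biUnion.mp h
      obtain ⟨hj1, hj2⟩ := Finset.mem_Icc.mp hj
      exact ⟨(hGmem j hj1 hj2 b hbj).2.2.1, (hGmem j hj1 hj2 b hbj).2.2.2⟩
  · intro T hT hTcard
    have hdS : Disjoint (T ∩ X1) (T ∩ X2) :=
      Finset.disjoint_of_subset_left Finset.inter_subset_right
        (Finset.disjoint_of_subset_right Finset.inter_subset_right hd)
    have hTsplit : (T ∩ X1) ∪ (T ∩ X2) = T := by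
      rw [← Finset.inter_union_distrib_left]
      exact Finset.inter_eq_left.mpr hT
    have hcards : (T ∩ X1).card + (T ∩ X2).card = 6 := by
      rw [← Finset.card_union_of_disjoint hdS, hTsplit, hTcard]
    -- disjointness of the two big families
    have hFG : Disjoint ((Finset.Icc 7 13).biUnion F) ((Finset.Icc 7 13).biUnion G) := by
      rw [Finset.disjoint_left]
      intro b hbF hbG
      obtain ⟨j, hj, hbj⟩ := Finset.mem_biUnion.mp hbF
      obtain ⟨j', hj', hbj'⟩ := Finset.mem_biUnion.mp hbG
      obtain ⟨hj1, hj2⟩ := Finset.mem_Icc.mp hj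
      obtain ⟨hj1', hj2'⟩ := Finset.mem_Icc.mp hj'
      have c1 := (hFmem j hj1 hj2 b hbj).1
      have c2 := (hGmem j' hj1' hj2' b hbj').1
      omega
    have hpairF : ∀ j ∈ Finset.Icc 7 13, ∀ j' ∈ Finset.Icc 7 13, j ≠ j' →
        Disjoint ((F j).filter (fun b => T ⊆ b)) ((F j').filter (fun b => T ⊆ b)) := by
      intro j hj j' hj' hne
      obtain ⟨hj1, hj2⟩ := Finset.mem_Icc.mp hj
      obtain ⟨hj1', hj2'⟩ := Finset.mem_Icc.mp hj'
      rw [Finset.disjoint_left]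
      intro b hb hb'
      have c1 := (hFmem j hj1 hj2 b (Finset.mem_of_mem_filter b hb)).1
      have c2 := (hFmem j' hj1' hj2' b (Finset.mem_of_mem_filter b hb')).1
      omega
    have hpairG : ∀ j ∈ Finset.Icc 7 13, ∀ j' ∈ Finset.Icc 7 13, j ≠ j' →
        Disjoint ((G j).filter (fun b => T ⊆ b)) ((G j').filter (fun b => T ⊆ b)) := by
      intro j hj j' hj' hne
      obtain ⟨hj1, hj2⟩ := Finset.mem_Icc.mp hj
      obtain ⟨hj1', hj2'⟩ := Finset.mem_Icc.mp hj'
      rw [Finset.disjoint_left]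
      intro b hb hb'
      have c1 := (hGmem j hj1 hj2 b (Finset.mem_of_mem_filter b hb)).2.1
      have c2 := (hGmem j' hj1' hj2' b (Finset.mem_of_mem_filter b hb')).2.1
      omega
    rw [Finset.filter_union,
      Finset.card_union_of_disjoint (Finset.disjoint_filter_filter hFG),
      Finset.filter_biUnion, Finset.filter_biUnion,
      Finset.card_biUnion hpairF, Finset.card_biUnion hpairG]
    have hFcount : ∀ j ∈ Finset.Icc 7 13,
        ((F j).filter (fun b => T ⊆ b)).card
          = ((D1 j).filter (fun b => T ∩ X1 ⊆ b)).card *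
            (((X2.powersetCard (13 - j)).filter (fun b => T ∩ X2 ⊆ b)).card) := by
      intro j hj
      obtain ⟨hj1, hj2⟩ := Finset.mem_Icc.mp hj
      exact prod_union_filter_card X1 X2 hd (D1 j) (X2.powersetCard (13 - j))
        (fun b hb => ((hD1 j hj1 hj2).1 b hb).1)
        (fun b hb => (Finset.mem_powersetCard.mp hb).1) T hT
    have hGcount : ∀ j ∈ Finset.Icc 7 13,
        ((G j).filter (fun b => T ⊆ b)).card
          = (((X1.powersetCard (13 - j)).filter (fun b => T ∩ X1 ⊆ b)).card) *
            ((D2 j).filter (fun b => T ∩ X2 ⊆ b)).card := by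
      intro j hj
      obtain ⟨hj1, hj2⟩ := Finset.mem_Icc.mp hj
      exact prod_union_filter_card X1 X2 hd (X1.powersetCard (13 - j)) (D2 j)
        (fun b hb => (Finset.mem_powersetCard.mp hb).1)
        (fun b hb => ((hD2 j hj1 hj2).1 b hb).1) T hT
    rw [Finset.sum_congr rfl hFcount, Finset.sum_congr rfl hGcount]
    apply final_arith ((T ∩ X1).card) ((T ∩ X2).card) hcards
    · -- hd : design counts on X1 side
      intro j hj1 hj2
      have key := design_lower 6 j (lamf j) ((T ∩ X1).card) X1 (D1 j)
        (hD1 j hj1 hj2).1 (hD1 j hj1 hj2).2 (T ∩ X1) Finset.inter_subset_right rfl (by omega)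
      rw [h1c] at key
      have h6 : 6 - (T ∩ X1).card = (T ∩ X2).card := by omega
      rwa [h6] at key
    · -- hp : powerset counts on X2 side
      intro j hj1 hj2
      split_ifs with h
      · rw [powersetCard_filter_count X2 (T ∩ X2) (13 - j) Finset.inter_subset_right h, h2c]
      · exact powersetCard_filter_count_zero X2 (T ∩ X2) (13 - j) (by omega)
    · -- he : design counts on X2 side
      intro j hj1 hj2
      have key := design_lower 6 j (lamf j) ((T ∩ X2).card) X2 (D2 j)
        (hD2 j hj1 hj2).1 (hD2 j hj1 hj2).2 (T ∩ X2) Finset.inter_subset_right rfl (by omega)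
      rw [h2c] at key
      have h6 : 6 - (T ∩ X2).card = (T ∩ X1).card := by omega
      rwa [h6] at key
    · -- hq : powerset counts on X1 side
      intro j hj1 hj2
      split_ifs with h
      · rw [powersetCard_filter_count X1 (T ∩ X1) (13 - j) Finset.inter_subset_right h, h1c]
      · exact powersetCard_filter_count_zero X1 (T ∩ X1) (13 - j) (by omega)
theorem designExists_6_46_13
    (h1 : SimpleDesignExists 6 23 7 5)
    (h2 : SimpleDesignExists 6 23 8 40)
    (h3 : SimpleDesignExists 6 23 9 200)
    (h4 : SimpleDesignExists 6 23 10 700)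
    (h5 : SimpleDesignExists 6 23 11 1820)
    (h6 : SimpleDesignExists 6 23 12 3640)
    (h7 : SimpleDesignExists 6 23 13 5720)
    : SimpleDesignExists 6 46 13 5483400 := by
  set X1 : Finset ℕ := Finset.range 23 with hX1
  set X2 : Finset ℕ := (Finset.range 23).image (· + 23) with hX2
  have hc1 : X1.card = 23 := Finset.card_range 23
  have hc2 : X2.card = 23 := by
    rw [hX2, Finset.card_image_of_injective _ (add_left_injective 23), Finset.card_range]
  have hdisj : Disjoint X1 X2 := by
    rw [Finset.disjoint_left]
    intro x hx hx'
    rw [hX1, Finset.mem_range] at hx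
    rw [hX2, Finset.mem_image] at hx'
    obtain ⟨y, _, rfl⟩ := hx'
    omega
  have hunion : X1 ∪ X2 = Finset.range 46 := by
    ext x
    simp only [hX1, hX2, Finset.mem_union, Finset.mem_range, Finset.mem_image]
    constructor
    · rintro (h | ⟨y, hy, rfl⟩) <;> omega
    · intro h
      by_cases hx : x < 23
      · exact Or.inl hx
      · exact Or.inr ⟨x - 23, by omega, by omega⟩
  obtain ⟨Xa1, Ba1, hXa1, hBa1, hda1⟩ := h1
  obtain ⟨Xa2, Ba2, hXa2, hBa2, hda2⟩ := h2
  obtain ⟨Xa3, Ba3, hXa3, hBa3, hda3⟩ := h3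
  obtain ⟨Xa4, Ba4, hXa4, hBa4, hda4⟩ := h4
  obtain ⟨Xa5, Ba5, hXa5, hBa5, hda5⟩ := h5
  obtain ⟨Xa6, Ba6, hXa6, hBa6, hda6⟩ := h6
  obtain ⟨Xa7, Ba7, hXa7, hBa7, hda7⟩ := h7
  obtain ⟨A7, hA7b, hA7d⟩ := design_transport 6 7 5 Xa1 X1 (by omega) Ba1 hBa1 hda1
  obtain ⟨A8, hA8b, hA8d⟩ := design_transport 6 8 40 Xa2 X1 (by omega) Ba2 hBa2 hda2
  obtain ⟨A9, hA9b, hA9d⟩ := design_transport 6 9 200 Xa3 X1 (by omega) Ba3 hBa3 hda3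
  obtain ⟨A10, hA10b, hA10d⟩ := design_transport 6 10 700 Xa4 X1 (by omega) Ba4 hBa4 hda4
  obtain ⟨A11, hA11b, hA11d⟩ := design_transport 6 11 1820 Xa5 X1 (by omega) Ba5 hBa5 hda5
  obtain ⟨A12, hA12b, hA12d⟩ := design_transport 6 12 3640 Xa6 X1 (by omega) Ba6 hBa6 hda6
  obtain ⟨A13, hA13b, hA13d⟩ := design_transport 6 13 5720 Xa7 X1 (by omega) Ba7 hBa7 hda7
  obtain ⟨C7, hC7b, hC7d⟩ := design_transport 6 7 5 Xa1 X2 (by omega) Ba1 hBa1 hda1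
  obtain ⟨C8, hC8b, hC8d⟩ := design_transport 6 8 40 Xa2 X2 (by omega) Ba2 hBa2 hda2
  obtain ⟨C9, hC9b, hC9d⟩ := design_transport 6 9 200 Xa3 X2 (by omega) Ba3 hBa3 hda3
  obtain ⟨C10, hC10b, hC10d⟩ := design_transport 6 10 700 Xa4 X2 (by omega) Ba4 hBa4 hda4
  obtain ⟨C11, hC11b, hC11d⟩ := design_transport 6 11 1820 Xa5 X2 (by omega) Ba5 hBa5 hda5
  obtain ⟨C12, hC12b, hC12d⟩ := design_transport 6 12 3640 Xa6 X2 (by omega) Ba6 hBa6 hda6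
  obtain ⟨C13, hC13b, hC13d⟩ := design_transport 6 13 5720 Xa7 X2 (by omega) Ba7 hBa7 hda7
  obtain ⟨B, hBb, hBc⟩ := construction X1 X2 hc1 hc2 hdisj
    (fun j => if j = 7 then A7 else if j = 8 then A8 else if j = 9 then A9
      else if j = 10 then A10 else if j = 11 then A11 else if j = 12 then A12
      else if j = 13 then A13 else ∅)
    (fun j => if j = 7 then C7 else if j = 8 then C8 else if j = 9 then C9
      else if j = 10 then C10 else if j = 11 then C11 else if j = 12 then C12
      else if j = 13 then C13 else ∅)
    (by
      intro j hj1 hj2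
      interval_cases j
      · exact ⟨by simpa using hA7b, by simpa [lamf] using hA7d⟩
      · exact ⟨by simpa using hA8b, by simpa [lamf] using hA8d⟩
      · exact ⟨by simpa using hA9b, by simpa [lamf] using hA9d⟩
      · exact ⟨by simpa using hA10b, by simpa [lamf] using hA10d⟩
      · exact ⟨by simpa using hA11b, by simpa [lamf] using hA11d⟩
      · exact ⟨by simpa using hA12b, by simpa [lamf] using hA12d⟩
      · exact ⟨by simpa using hA13b, by simpa [lamf] using hA13d⟩)
    (by
      intro j hj1 hj2
      interval_cases j
      · exact ⟨by simpa using hC7b, by simpa [lamf] using hC7d⟩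
      · exact ⟨by simpa using hC8b, by simpa [lamf] using hC8d⟩
      · exact ⟨by simpa using hC9b, by simpa [lamf] using hC9d⟩
      · exact ⟨by simpa using hC10b, by simpa [lamf] using hC10d⟩
      · exact ⟨by simpa using hC11b, by simpa [lamf] using hC11d⟩
      · exact ⟨by simpa using hC12b, by simpa [lamf] using hC12d⟩
      · exact ⟨by simpa using hC13b, by simpa [lamf] using hC13d⟩)
  refine ⟨Finset.range 46, B, Finset.card_range 46, ?_, ?_⟩
  · intro b hb
    rw [← hunion]
    exact hBb b hb
  · intro T hT hTcard
    apply hBc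
    · rwa [hunion]
    · exact hTcard
end
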